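/- For every queue automaton there exists a queue automaton without wildcard transitions (no transitions labeled a[*/δ]) whose process graph is branching bisimilar to that of the original automaton. -/

import Mathlib

/-- A labelled transition system with silent action `τ` modelled as `none`. -/
structure LTS (S A : Type) where
  tr : S → Option A → S → Prop
  fin : S → Prop

/-- Zero or more τ-steps. -/
def LTS.tauStar {S A : Type} (L : LTS S A) : S → S → Prop :=
  Relation.ReflTransGen (fun s t => L.tr s none t)

/-- `s →(a) t` : either `s →a t`, or `a = τ` and `s = t`. -/
def LTS.optStep {S A : Type} (L : LTS S A) (s : S) (a : Option A) (t : S) : Prop :=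
  L.tr s a t ∨ (a = none ∧ s = t)

/-- A symmetric relation `R` is a strong bisimulation. -/
def IsStrongBisim {S A : Type} (L : LTS S A) (R : S → S → Prop) : Prop :=
  (∀ s t, R s t → R t s) ∧
  (∀ s t, R s t →
    (∀ a s', L.tr s a s' → ∃ t', L.tr t a t' ∧ R s' t') ∧
    (L.fin s → L.fin t))

/-- Strong bisimilarity: related by some strong bisimulation. -/
def Bisim {S A : Type} (L : LTS S A) (s t : S) : Prop :=
  ∃ R, IsStrongBisim L R ∧ R s t

/-- A symmetric relation `R` is a branching bisimulation. -/
def IsBranchingBisim {S A : Type} (L : LTS S A) (R : S → S → Prop) : Prop :=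
  (∀ s t, R s t → R t s) ∧
  (∀ s t, R s t →
    (∀ a s', L.tr s a s' →
      ∃ t'' t', L.tauStar t t'' ∧ L.optStep t'' a t' ∧ R s t'' ∧ R s' t') ∧
    (L.fin s → ∃ t', L.tauStar t t' ∧ L.fin t'))

/-- Branching bisimilarity: related by some branching bisimulation. -/
def BBisim {S A : Type} (L : LTS S A) (s t : S) : Prop :=
  ∃ R, IsBranchingBisim L R ∧ R s t

/-- A branching bisimulation between (the states of) two LTSs. -/
def IsBBisimSys {S₁ S₂ A : Type} (L₁ : LTS S₁ A) (L₂ : LTS S₂ A)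
    (R : S₁ → S₂ → Prop) : Prop :=
  (∀ s t, R s t →
    (∀ a s', L₁.tr s a s' →
      ∃ t'' t', L₂.tauStar t t'' ∧ L₂.optStep t'' a t' ∧ R s t'' ∧ R s' t') ∧
    (L₁.fin s → ∃ t', L₂.tauStar t t' ∧ L₂.fin t')) ∧
  (∀ s t, R s t →
    (∀ a t', L₂.tr t a t' →
      ∃ s'' s', L₁.tauStar s s'' ∧ L₁.optStep s'' a s' ∧ R s'' t ∧ R s' t') ∧
    (L₂.fin t → ∃ s', L₁.tauStar s s' ∧ L₁.fin s'))

/-- Two pointed process graphs are branching bisimilar. -/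
def BBisimSys {S₁ S₂ A : Type} (L₁ : LTS S₁ A) (s : S₁) (L₂ : LTS S₂ A) (t : S₂) : Prop :=
  ∃ R, IsBBisimSys L₁ L₂ R ∧ R s t

/-- The head condition of a queue-automaton transition: `ε`, `*`, or a datum. -/
inductive Head (D : Type) where
  | emp : Head D
  | star : Head D
  | data (d : D) : Head D

/-- A queue automaton. -/
structure QA (S A D : Type) where
  tr : S → Option A → Head D → List D → S → Prop
  init : S
  fin : S → Prop

/-- Effect of a transition with head condition `h` enqueueing `δ` on the queue
contents (head of the queue is the rightmost element, enqueueing prepends). -/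
inductive QStep {D : Type} : Head D → List D → List D → List D → Prop
  | emp (δ : List D) : QStep Head.emp δ [] δ
  | data (d : D) (δ ζ : List D) : QStep (Head.data d) δ (ζ ++ [d]) (δ ++ ζ)
  | star (δ ζ : List D) : QStep Head.star δ ζ (δ ++ ζ)

/-- The process graph of a queue automaton. -/
def QA.proc {S A D : Type} (Q : QA S A D) : LTS (S × List D) A where
  tr := fun c a c' => ∃ h δ, Q.tr c.1 a h δ c'.1 ∧ QStep h δ c.2 c'.2
  fin := fun c => Q.fin c.1

/-- The queue automaton has finitely many transitions. -/
def QA.FiniteTrans {S A D : Type} (Q : QA S A D) : Prop :=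
  Set.Finite {x : S × Option A × Head D × List D × S |
    Q.tr x.1 x.2.1 x.2.2.1 x.2.2.2.1 x.2.2.2.2}

namespace EWTaux

variable {S A D : Type}

/-- Indices of wildcard transitions of `Q`. -/
def StarT (Q : QA S A D) : Type :=
  {x : S × Option A × List D × S // Q.tr x.1 x.2.1 Head.star x.2.2.1 x.2.2.2}

/-- Transitions of the wildcard-free automaton. -/
inductive Tr' (Q : QA S A D) :
    (S ⊕ StarT Q) → Option A → Head (D ⊕ Unit) → List (D ⊕ Unit) → (S ⊕ StarT Q) → Prop
  | emp {s a δ t} : Q.tr s a Head.emp δ t →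
      Tr' Q (.inl s) a Head.emp (δ.map Sum.inl) (.inl t)
  | data {s a d δ t} : Q.tr s a (Head.data d) δ t →
      Tr' Q (.inl s) a (Head.data (Sum.inl d)) (δ.map Sum.inl) (.inl t)
  | starEmp {s a δ t} : Q.tr s a Head.star δ t →
      Tr' Q (.inl s) a Head.emp (δ.map Sum.inl) (.inl t)
  | starEnter (w : StarT Q) (d : D) :
      Tr' Q (.inl w.1.1) w.1.2.1 (Head.data (Sum.inl d)) [Sum.inl d, Sum.inr ()] (.inr w)
  | rot (w : StarT Q) (e : D) :
      Tr' Q (.inr w) none (Head.data (Sum.inl e)) [Sum.inl e] (.inr w)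
  | starExit (w : StarT Q) :
      Tr' Q (.inr w) none (Head.data (Sum.inr ())) (w.1.2.2.1.map Sum.inl) (.inl w.1.2.2.2)

def QW (Q : QA S A D) : QA (S ⊕ StarT Q) A (D ⊕ Unit) where
  tr := Tr' Q
  init := .inl Q.init
  fin := fun s => match s with | .inl s => Q.fin s | .inr _ => False

/-- The branching bisimulation. -/
inductive Rel (Q : QA S A D) : (S × List D) → ((S ⊕ StarT Q) × List (D ⊕ Unit)) → Prop
  | base (s : S) (ζ : List D) : Rel Q (s, ζ) (.inl s, ζ.map Sum.inl)
  | mid (w : StarT Q) (d : D) (ζ₁ ζ₂ : List D) :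
      Rel Q (w.1.2.2.2, w.1.2.2.1 ++ ζ₁ ++ ζ₂ ++ [d])
            (.inr w, ζ₂.map Sum.inl ++ [Sum.inl d, Sum.inr ()] ++ ζ₁.map Sum.inl)

lemma snocInj {α : Type*} {l₁ l₂ : List α} {x y : α} (h : l₁ ++ [x] = l₂ ++ [y]) :
    l₁ = l₂ ∧ x = y := by
  have := List.append_inj' h rfl
  simpa using this

lemma map_inl_snoc {ζ : List D} {ξ : List (D ⊕ Unit)} {d : D}
    (h : ζ.map Sum.inl = ξ ++ [Sum.inl d]) :
    ∃ ζ₀, ζ = ζ₀ ++ [d] ∧ ξ = ζ₀.map Sum.inl := by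
  induction ζ using List.reverseRecOn with
  | nil => simp at h
  | append_singleton ζ₀ e _ =>
    rw [List.map_append] at h
    obtain ⟨h1, h2⟩ := snocInj h
    exact ⟨ζ₀, by simp [Sum.inl.injEq] at h2; simp [h2], h1.symm⟩

end EWTaux
namespace EWTaux
variable {S A D : Type}

lemma tauPath (Q : QA S A D) (w : StarT Q) (d : D) (ζ₁ ζ₂ : List D) :
    (QW Q).proc.tauStar
      (.inr w, ζ₂.map Sum.inl ++ [Sum.inl d, Sum.inr ()] ++ ζ₁.map Sum.inl)
      (.inl w.1.2.2.2, (w.1.2.2.1 ++ ζ₁ ++ ζ₂ ++ [d]).map Sum.inl) := by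
  induction ζ₁ using List.reverseRecOn generalizing ζ₂ with
  | nil =>
    apply Relation.ReflTransGen.single
    refine ⟨Head.data (Sum.inr ()), w.1.2.2.1.map Sum.inl, Tr'.starExit w, ?_⟩
    have := QStep.data (Sum.inr () : D ⊕ Unit) (w.1.2.2.1.map Sum.inl)
      (ζ₂.map Sum.inl ++ [Sum.inl d])
    simpa using this
  | append_singleton ζ₁ e ih =>
    apply Relation.ReflTransGen.head (b := (.inr w,
      ((e :: ζ₂).map Sum.inl ++ [Sum.inl d, Sum.inr ()] ++ ζ₁.map Sum.inl)))
    · refine ⟨Head.data (Sum.inl e), [Sum.inl e], Tr'.rot w e, ?_⟩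
      have := QStep.data (Sum.inl e : D ⊕ Unit) [Sum.inl e]
        (ζ₂.map Sum.inl ++ [Sum.inl d, Sum.inr ()] ++ ζ₁.map Sum.inl)
      simpa using this
    · have := ih (e :: ζ₂)
      have heq : w.1.2.2.1 ++ ζ₁ ++ (e :: ζ₂) ++ [d] = w.1.2.2.1 ++ (ζ₁ ++ [e]) ++ ζ₂ ++ [d] := by
        simp
      rw [heq] at this
      exact this

end EWTaux
namespace EWTaux
variable {S A D : Type}

lemma sim_step (Q : QA S A D) {s : S} {ζ : List D} {a : Option A} {c' : S × List D}
    (h : Q.proc.tr (s, ζ) a c') :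
    ∃ c'', (QW Q).proc.tr (.inl s, ζ.map Sum.inl) a c'' ∧ Rel Q c' c'' := by
  obtain ⟨t, ζ'⟩ := c'
  obtain ⟨hh, δ₀, htr, hq⟩ := h
  cases hq with
  | emp =>
    exact ⟨(.inl t, ζ'.map Sum.inl), ⟨Head.emp, ζ'.map Sum.inl, Tr'.emp htr, QStep.emp _⟩,
      Rel.base t ζ'⟩
  | data d _ ζ₀ =>
    refine ⟨(.inl t, (δ₀ ++ ζ₀).map Sum.inl), ⟨Head.data (Sum.inl d), δ₀.map Sum.inl,
      Tr'.data htr, ?_⟩, Rel.base t (δ₀ ++ ζ₀)⟩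
    have := QStep.data (Sum.inl d : D ⊕ Unit) (δ₀.map Sum.inl) (ζ₀.map Sum.inl)
    simpa using this
  | star _ ζ =>
    induction ζ using List.reverseRecOn with
    | nil =>
      refine ⟨(.inl t, (δ₀ ++ []).map Sum.inl), ⟨Head.emp, δ₀.map Sum.inl,
        Tr'.starEmp htr, ?_⟩, Rel.base t (δ₀ ++ [])⟩
      have := QStep.emp (δ₀.map (Sum.inl : D → D ⊕ Unit))
      simpa using this
    | append_singleton ζ₀ d _ =>
      refine ⟨(.inr ⟨(s, a, δ₀, t), htr⟩, [Sum.inl d, Sum.inr ()] ++ ζ₀.map Sum.inl),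
        ⟨Head.data (Sum.inl d), [Sum.inl d, Sum.inr ()],
          Tr'.starEnter ⟨(s, a, δ₀, t), htr⟩ d, ?_⟩, ?_⟩
      · have := QStep.data (Sum.inl d : D ⊕ Unit) [Sum.inl d, Sum.inr ()] (ζ₀.map Sum.inl)
        simpa using this
      · have := Rel.mid (Q := Q) ⟨(s, a, δ₀, t), htr⟩ d ζ₀ []
        simpa using this

end EWTaux
namespace EWTaux
variable {S A D : Type}

lemma sim_back_base (Q : QA S A D) {s : S} {ζ : List D} {a : Option A}
    {c₂' : (S ⊕ StarT Q) × List (D ⊕ Unit)}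
    (h : (QW Q).proc.tr (.inl s, ζ.map Sum.inl) a c₂') :
    ∃ c', Q.proc.tr (s, ζ) a c' ∧ Rel Q c' c₂' := by
  obtain ⟨t₂, ξ₂⟩ := c₂'
  obtain ⟨hh, δ', htr, hq⟩ := h
  generalize hgen : ζ.map Sum.inl = ξ at hq
  cases htr with
  | emp htr0 =>
    cases hq with
    | emp =>
      have hζ : ζ = [] := by simpa using hgen
      subst hζ
      exact ⟨(_, _), ⟨Head.emp, _, htr0, QStep.emp _⟩, Rel.base _ _⟩
  | data htr0 =>
    cases hq with
    | data _ _ ξ₀ =>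
      rename_i d0 δ0 t0
      have hgen2 : ζ.map Sum.inl = ξ₀ ++ [Sum.inl d0] := hgen
      obtain ⟨ζ₀, hζ, hξ⟩ := map_inl_snoc hgen2
      subst hζ hξ
      exact ⟨(t0, δ0 ++ ζ₀), ⟨Head.data d0, δ0, htr0, QStep.data _ _ _⟩,
        by have := Rel.base (Q := Q) t0 (δ0 ++ ζ₀); simpa using this⟩
  | starEmp htr0 =>
    cases hq with
    | emp =>
      have hζ : ζ = [] := by simpa using hgen
      subst hζ
      rename_i δ0 t0
      refine ⟨(t0, δ0 ++ []), ⟨Head.star, δ0, htr0, QStep.star _ _⟩, ?_⟩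
      rw [List.append_nil]
      exact Rel.base t0 δ0
  | starEnter w d =>
    cases hq with
    | data _ _ ξ₀ =>
      have hgen2 : ζ.map Sum.inl = ξ₀ ++ [Sum.inl d] := hgen
      obtain ⟨ζ₀, hζ, hξ⟩ := map_inl_snoc hgen2
      subst hζ hξ
      refine ⟨(w.1.2.2.2, w.1.2.2.1 ++ (ζ₀ ++ [d])),
        ⟨Head.star, w.1.2.2.1, w.2, QStep.star _ _⟩, ?_⟩
      have := Rel.mid w d ζ₀ []
      simpa using this

lemma sim_back_mid (Q : QA S A D) (w : StarT Q) (d : D) (ζ₁ ζ₂ : List D)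
    {a : Option A} {c₂' : (S ⊕ StarT Q) × List (D ⊕ Unit)}
    (h : (QW Q).proc.tr
      (.inr w, ζ₂.map Sum.inl ++ [Sum.inl d, Sum.inr ()] ++ ζ₁.map Sum.inl) a c₂') :
    a = none ∧ Rel Q (w.1.2.2.2, w.1.2.2.1 ++ ζ₁ ++ ζ₂ ++ [d]) c₂' := by
  obtain ⟨t₂, ξ₂⟩ := c₂'
  obtain ⟨hh, δ', htr, hq⟩ := h
  generalize hgen : ζ₂.map Sum.inl ++ [Sum.inl d, Sum.inr ()] ++ ζ₁.map Sum.inl = ξ at hq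
  cases htr with
  | rot w e =>
    cases hq with
    | data _ _ ξ₀ =>
      -- ξ₀ ++ [inl e] = mapζ₂ ++ [inl d, inr()] ++ mapζ₁
      induction ζ₁ using List.reverseRecOn with
      | nil =>
        exfalso
        have h2 := congrArg List.getLast? hgen.symm
        simp [List.getLast?_concat,
          show ζ₂.map (Sum.inl : D → D ⊕ Unit) ++ [Sum.inl d, Sum.inr ()] ++ ([] : List D).map Sum.inl
             = (ζ₂.map Sum.inl ++ [Sum.inl d]) ++ [Sum.inr ()] by simp] at h2
      | append_singleton ζ₁' e' _ =>
        have hgen2 : ζ₂.map Sum.inl ++ [Sum.inl d, Sum.inr ()] ++ (ζ₁' ++ [e']).map Sum.inl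
            = ξ₀ ++ [Sum.inl e] := hgen
        have hgen' : ξ₀ ++ [Sum.inl e]
            = (ζ₂.map Sum.inl ++ [Sum.inl d, Sum.inr ()] ++ ζ₁'.map Sum.inl) ++ [Sum.inl e'] := by
          rw [← hgen2]; simp
        obtain ⟨h1, h2⟩ := snocInj hgen'
        have he : e = e' := by simpa using h2
        subst he h1
        constructor
        · rfl
        · have := Rel.mid w d ζ₁' (e :: ζ₂)
          have heq : w.1.2.2.1 ++ (ζ₁' ++ [e]) ++ ζ₂ ++ [d]
              = w.1.2.2.1 ++ ζ₁' ++ (e :: ζ₂) ++ [d] := by simp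
          rw [heq]
          simpa using this
  | starExit w =>
    cases hq with
    | data _ _ ξ₀ =>
      induction ζ₁ using List.reverseRecOn with
      | nil =>
        have hgen2 : ζ₂.map Sum.inl ++ [Sum.inl d, Sum.inr ()] ++ ([] : List D).map Sum.inl
            = ξ₀ ++ [(Sum.inr () : D ⊕ Unit)] := hgen
        have hgen' : ξ₀ ++ [(Sum.inr () : D ⊕ Unit)]
            = (ζ₂.map Sum.inl ++ [Sum.inl d]) ++ [Sum.inr ()] := by
          rw [← hgen2]; simp
        obtain ⟨h1, _⟩ := snocInj hgen'
        subst h1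
        refine ⟨rfl, ?_⟩
        have := Rel.base (Q := Q) w.1.2.2.2 (w.1.2.2.1 ++ ζ₂ ++ [d])
        simpa using this
      | append_singleton ζ₁' e' _ =>
        exfalso
        have hgen2 : (ζ₂.map Sum.inl ++ [Sum.inl d, Sum.inr ()] ++ ζ₁'.map Sum.inl) ++ [Sum.inl e']
            = ξ₀ ++ [(Sum.inr () : D ⊕ Unit)] := by
          rw [show (ζ₂.map Sum.inl ++ [Sum.inl d, Sum.inr ()] ++ ζ₁'.map Sum.inl) ++ [(Sum.inl e' : D ⊕ Unit)]
              = ζ₂.map Sum.inl ++ [Sum.inl d, Sum.inr ()] ++ (ζ₁' ++ [e']).map Sum.inl by simp]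
          exact hgen
        obtain ⟨-, h2⟩ := snocInj hgen2
        simp at h2

end EWTaux
namespace EWTaux
variable {S A D : Type}

lemma finite_starT (Q : QA S A D) (hQ : Q.FiniteTrans) : Finite (StarT Q) := by
  have h1 : Finite {x : S × Option A × Head D × List D × S //
      Q.tr x.1 x.2.1 x.2.2.1 x.2.2.2.1 x.2.2.2.2} := hQ.to_subtype
  refine Finite.of_injective (fun w : StarT Q =>
    (⟨(w.1.1, w.1.2.1, Head.star, w.1.2.2), w.2⟩ : {x : S × Option A × Head D × List D × S //
      Q.tr x.1 x.2.1 x.2.2.1 x.2.2.2.1 x.2.2.2.2})) ?_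
  rintro ⟨⟨a1, a2, a3, a4⟩, ha⟩ ⟨⟨b1, b2, b3, b4⟩, hb⟩ h
  simp only [Subtype.mk.injEq, Prod.mk.injEq] at h
  simp [Prod.ext_iff, h.1, h.2.1, h.2.2.2]
  rfl

def mapHead : Head D → Head (D ⊕ Unit)
  | .emp => .emp
  | .star => .emp
  | .data d => .data (Sum.inl d)

def FF (Q : QA S A D) :
    ({x : S × Option A × Head D × List D × S //
        Q.tr x.1 x.2.1 x.2.2.1 x.2.2.2.1 x.2.2.2.2} ⊕ (StarT Q × D) ⊕ (StarT Q × D) ⊕ StarT Q) →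
      (S ⊕ StarT Q) × Option A × Head (D ⊕ Unit) × List (D ⊕ Unit) × (S ⊕ StarT Q)
  | .inl x => (.inl x.1.1, x.1.2.1, mapHead x.1.2.2.1, x.1.2.2.2.1.map Sum.inl, .inl x.1.2.2.2.2)
  | .inr (.inl (w, d)) => (.inl w.1.1, w.1.2.1, Head.data (Sum.inl d), [Sum.inl d, Sum.inr ()], .inr w)
  | .inr (.inr (.inl (w, e))) => (.inr w, none, Head.data (Sum.inl e), [Sum.inl e], .inr w)
  | .inr (.inr (.inr w)) => (.inr w, none, Head.data (Sum.inr ()), w.1.2.2.1.map Sum.inl, .inl w.1.2.2.2)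

lemma finite_QW [Finite S] [Finite A] [Finite D] (Q : QA S A D) (hQ : Q.FiniteTrans) :
    (QW Q).FiniteTrans := by
  have h1 : Finite {x : S × Option A × Head D × List D × S //
      Q.tr x.1 x.2.1 x.2.2.1 x.2.2.2.1 x.2.2.2.2} := hQ.to_subtype
  have h2 : Finite (StarT Q) := finite_starT Q hQ
  apply Set.Finite.subset (Set.finite_range (FF Q))
  rintro ⟨s, a, h, δ, t⟩ hx
  cases hx with
  | emp htr => exact ⟨.inl ⟨(_, _, Head.emp, _, _), htr⟩, rfl⟩
  | data htr => exact ⟨.inl ⟨(_, _, Head.data _, _, _), htr⟩, rfl⟩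
  | starEmp htr => exact ⟨.inl ⟨(_, _, Head.star, _, _), htr⟩, rfl⟩
  | starEnter w d => exact ⟨.inr (.inl (w, d)), rfl⟩
  | rot w e => exact ⟨.inr (.inr (.inl (w, e))), rfl⟩
  | starExit w => exact ⟨.inr (.inr (.inr w)), rfl⟩

lemma isBBisimSys (Q : QA S A D) : IsBBisimSys Q.proc (QW Q).proc (Rel Q) := by
  constructor
  · intro x y hR
    constructor
    · intro a x' hstep
      cases hR with
      | base s ζ =>
        obtain ⟨c'', hstep', hrel⟩ := sim_step Q hstep
        exact ⟨_, c'', Relation.ReflTransGen.refl, Or.inl hstep', Rel.base s ζ, hrel⟩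
      | mid w d ζ₁ ζ₂ =>
        obtain ⟨c'', hstep', hrel⟩ := sim_step Q hstep
        exact ⟨_, c'', tauPath Q w d ζ₁ ζ₂, Or.inl hstep', Rel.base _ _, hrel⟩
    · intro hfin
      cases hR with
      | base s ζ => exact ⟨_, Relation.ReflTransGen.refl, hfin⟩
      | mid w d ζ₁ ζ₂ => exact ⟨_, tauPath Q w d ζ₁ ζ₂, hfin⟩
  · intro x y hR
    constructor
    · intro a y' hstep
      cases hR with
      | base s ζ =>
        obtain ⟨c', hstep', hrel⟩ := sim_back_base Q hstep
        exact ⟨(s, ζ), c', Relation.ReflTransGen.refl, Or.inl hstep', Rel.base s ζ, hrel⟩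
      | mid w d ζ₁ ζ₂ =>
        obtain ⟨ha, hrel⟩ := sim_back_mid Q w d ζ₁ ζ₂ hstep
        subst ha
        exact ⟨_, _, Relation.ReflTransGen.refl, Or.inr ⟨rfl, rfl⟩, Rel.mid w d ζ₁ ζ₂, hrel⟩
    · intro hfin
      cases hR with
      | base s ζ => exact ⟨(s, ζ), Relation.ReflTransGen.refl, hfin⟩
      | mid w d ζ₁ ζ₂ => exact hfin.elim

end EWTaux

/-- For every queue automaton there exists a queue automaton
without wildcard (`a[*/δ]`) transitions whose process graph is branching
bisimilar to that of the original automaton. -/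
theorem eliminate_wildcard_transitions {S A D : Type} [Finite S] [Finite A] [Finite D]
    (Q : QA S A D) (hQ : Q.FiniteTrans) :
    ∃ (S' D' : Type) (_ : Finite S') (_ : Finite D') (Q' : QA S' A D'),
      Q'.FiniteTrans ∧
      (∀ s a δ t, ¬ Q'.tr s a Head.star δ t) ∧
      BBisimSys Q.proc (Q.init, []) Q'.proc (Q'.init, []) := by
  haveI := EWTaux.finite_starT Q hQ
  refine ⟨S ⊕ EWTaux.StarT Q, D ⊕ Unit, inferInstance, inferInstance, EWTaux.QW Q,
    EWTaux.finite_QW Q hQ, ?_, ?_⟩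
  · intro s a δ t h
    cases h
  · exact ⟨EWTaux.Rel Q, EWTaux.isBBisimSys Q, EWTaux.Rel.base Q.init []⟩
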